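/- Let (u_n) be a sequence of nonzero complex numbers and (z_n) a sequence with n·z_n → −1, satisfying 1/u_{n+1} = 1/u_n + z_n + ε_n where Σ|ε_n| < ∞. Then (log n)·u_n → −1 as n → ∞; in particular |u_n| ~ 1/log n. -/

import Mathlib

open Filter Topology

open Finset

/-- If `n·z_n → −1` and `1/u_{n+1} = 1/u_n + z_n + ε_n` with `Σ|ε_n| < ∞`, then
`(log n)·u_n → −1`, so in particular `|u_n| ~ 1/log n`. -/
theorem log_mul_u_tendsto_neg_one (u z ε : ℕ → ℂ) (hu : ∀ n, u n ≠ 0)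
    (hz : Tendsto (fun n : ℕ => (n : ℂ) * z n) atTop (𝓝 (-1)))
    (hε : Summable fun n => ‖ε n‖)
    (hrec : ∀ n, 1 / u (n + 1) = 1 / u n + z n + ε n) :
    Tendsto (fun n : ℕ => (Real.log n : ℂ) * u n) atTop (𝓝 (-1)) := by
  set w : ℕ → ℂ := fun k => z k + ((k : ℂ) + 1)⁻¹ with hw_def
  set W : ℕ → ℂ := fun n => ∑ k ∈ range n, w k with hW_def
  set E : ℕ → ℂ := fun n => ∑ k ∈ range n, ε k with hE_def
  set L : ℕ → ℂ := fun n => ((Real.log n : ℝ) : ℂ) with hL_def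
  -- z tends to 0
  have hz0 : Tendsto z atTop (𝓝 0) := by
    have h1 : Tendsto (fun n : ℕ => ((n : ℂ))⁻¹ * ((n : ℂ) * z n)) atTop (𝓝 (0 * (-1))) := by
      refine Tendsto.mul ?_ hz
      have h0 := (Complex.continuous_ofReal.tendsto 0).comp tendsto_inv_atTop_nhds_zero_nat
      simpa [Function.comp_def, Complex.ofReal_inv] using h0
    rw [zero_mul] at h1
    apply h1.congr'
    filter_upwards [eventually_ne_atTop 0] with n hn
    have : (n : ℂ) ≠ 0 := Nat.cast_ne_zero.mpr hn
    field_simp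
  -- (k+1) * w k → 0
  have hw1 : Tendsto (fun k : ℕ => ((k : ℂ) + 1) * w k) atTop (𝓝 0) := by
    have h1 : Tendsto (fun k : ℕ => (k : ℂ) * z k + z k + 1) atTop (𝓝 (-1 + 0 + 1)) :=
      (hz.add hz0).add tendsto_const_nhds
    norm_num at h1
    apply h1.congr
    intro k
    have hk : (k : ℂ) + 1 ≠ 0 := Nat.cast_add_one_ne_zero k
    field_simp [hw_def]
    simp only [hw_def]; linear_combination -(mul_inv_cancel₀ hk)
  -- w = o(1/(k+1)) (real-valued bound)
  have hwoC : w =o[atTop] fun k : ℕ => ((k : ℂ) + 1)⁻¹ := by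
    rw [Asymptotics.isLittleO_iff_tendsto' (by
      filter_upwards with k hk
      exact absurd hk (inv_ne_zero (Nat.cast_add_one_ne_zero k)))]
    apply hw1.congr
    intro k
    rw [div_eq_mul_inv, inv_inv]
    ring
  have hwo : w =o[atTop] fun k : ℕ => ((k : ℝ) + 1)⁻¹ := by
    refine hwoC.norm_right.congr_right fun k => ?_
    rw [norm_inv]; norm_cast
  -- sum of w is o(harmonic)
  have hharm : ∀ n : ℕ, ((harmonic n : ℝ)) = ∑ i ∈ range n, ((i : ℝ) + 1)⁻¹ := by
    intro n; rw [harmonic]; push_cast; rfl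
  have hHtop : Tendsto (fun n : ℕ => ∑ i ∈ range n, ((i : ℝ) + 1)⁻¹) atTop atTop := by
    apply Real.tendsto_sum_range_one_div_nat_succ_atTop.congr
    intro n; exact Finset.sum_congr rfl fun i _ => one_div _
  have hWoH : W =o[atTop] fun n : ℕ => ∑ i ∈ range n, ((i : ℝ) + 1)⁻¹ :=
    hwo.sum_range (fun i => by positivity) hHtop
  -- harmonic / log → 1
  have hLtop : Tendsto (fun n : ℕ => Real.log n) atTop atTop :=
    Real.tendsto_log_atTop.comp tendsto_natCast_atTop_atTop
  have hHL : Tendsto (fun n : ℕ => (harmonic n : ℝ) / Real.log n) atTop (𝓝 1) := by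
    have h1 : Tendsto (fun n : ℕ => ((harmonic n : ℝ) - Real.log n) / Real.log n + 1)
        atTop (𝓝 (0 + 1)) :=
      (Tendsto.div_atTop Real.tendsto_harmonic_sub_log hLtop).add tendsto_const_nhds
    norm_num at h1
    apply h1.congr'
    filter_upwards [eventually_ge_atTop 2] with n hn
    have hl : Real.log n ≠ 0 := by
      have : (1 : ℝ) < n := by exact_mod_cast Nat.lt_of_lt_of_le Nat.one_lt_two hn
      exact ne_of_gt (Real.log_pos this)
    field_simp
    ring
  -- harmonic sums =O log, hence W =o log
  have hHO : (fun n : ℕ => ∑ i ∈ range n, ((i : ℝ) + 1)⁻¹) =O[atTop]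
      fun n : ℕ => Real.log n := by
    refine Asymptotics.isBigO_of_div_tendsto_nhds ?_ 1 ?_
    · filter_upwards [eventually_ge_atTop 2] with n hn h
      have : (1 : ℝ) < n := by exact_mod_cast Nat.lt_of_lt_of_le Nat.one_lt_two hn
      exact absurd h (ne_of_gt (Real.log_pos this))
    · exact hHL.congr fun n => by rw [hharm, Pi.div_apply]
  have hWoL : W =o[atTop] fun n : ℕ => Real.log n := hWoH.trans_isBigO hHO
  -- W / L → 0  (complex)
  have hWL : Tendsto (fun n : ℕ => W n / L n) atTop (𝓝 0) := by
    have : W =o[atTop] L := by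
      refine Asymptotics.IsLittleO.of_norm_right (hWoL.congr_right fun n => ?_)
      rw [hL_def]
      simp only [Complex.norm_real, Real.norm_eq_abs]
      exact (abs_of_nonneg (Real.log_natCast_nonneg n)).symm
    exact this.tendsto_div_nhds_zero
  -- L⁻¹ → 0
  have hLinv : Tendsto (fun n : ℕ => (L n)⁻¹) atTop (𝓝 0) := by
    have : Tendsto (fun n : ℕ => (((Real.log n)⁻¹ : ℝ) : ℂ)) atTop (𝓝 ((0 : ℝ) : ℂ)) :=
      (Complex.continuous_ofReal.tendsto 0).comp hLtop.inv_tendsto_atTop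
    simpa [hL_def] using this
  -- Hc / L → 1 where Hc n = (harmonic n : ℂ)
  have hHcL : Tendsto (fun n : ℕ => ((harmonic n : ℝ) : ℂ) / L n) atTop (𝓝 1) := by
    have : Tendsto (fun n : ℕ => (((harmonic n : ℝ) / Real.log n : ℝ) : ℂ)) atTop
        (𝓝 ((1 : ℝ) : ℂ)) := (Complex.continuous_ofReal.tendsto 1).comp hHL
    simpa [hL_def] using this
  -- E converges
  have hεs : Summable ε := hε.of_norm
  have hE : Tendsto E atTop (𝓝 (∑' n, ε n)) := hεs.hasSum.tendsto_sum_nat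
  -- 1/u n formula
  have hv : ∀ n, 1 / u n = 1 / u 0 + ∑ k ∈ range n, (z k + ε k) := by
    intro n
    induction n with
    | zero => simp
    | succ n ih => rw [hrec n, ih, Finset.sum_range_succ]; ring
  have hsum : ∀ n, ∑ k ∈ range n, (z k + ε k)
      = (-(((harmonic n : ℝ)) : ℂ) + W n) + E n := by
    intro n
    rw [Finset.sum_add_distrib, hW_def, hE_def]
    congr 1
    have : ∀ k ∈ range n, z k = -((k : ℂ) + 1)⁻¹ + w k := by
      intro k _; rw [hw_def]; ring
    rw [Finset.sum_congr rfl this, Finset.sum_add_distrib, Finset.sum_neg_distrib]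
    congr 2
    rw [hharm]
    push_cast
    rfl
  -- main limit
  have key : Tendsto (fun n : ℕ => (1 / u n) / L n) atTop (𝓝 (-1)) := by
    have h1 : Tendsto (fun n : ℕ =>
        (1 / u 0 + E n) * (L n)⁻¹ + (-(((harmonic n : ℝ) : ℂ) / L n) + W n / L n))
        atTop (𝓝 ((1 / u 0 + (∑' n, ε n)) * 0 + (-1 + 0))) :=
      ((tendsto_const_nhds.add hE).mul hLinv).add (hHcL.neg.add hWL)
    norm_num at h1
    apply h1.congr
    intro n
    rw [hv n, hsum n]
    push_cast
    ring
  have h2 : Tendsto (fun n : ℕ => ((1 / u n) / L n)⁻¹) atTop (𝓝 ((-1 : ℂ))⁻¹) :=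
    key.inv₀ (by norm_num)
  norm_num at h2
  apply h2.congr
  intro n
  rfl
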